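/- The k × k grid graph contains a bramble of order at least k + 1; consequently its treewidth is at least k, and any graph containing a k × k grid minor has treewidth at least k. -/

import Mathlib

open SimpleGraph

namespace TWPaper

/-- `(T, B)` is a tree decomposition of `G`. -/
def IsTreeDecomp {V ι : Type*} (G : SimpleGraph V) (T : SimpleGraph ι) (B : ι → Set V) : Prop :=
  T.IsTree ∧
  (∀ v w : V, G.Adj v w → ∃ x, v ∈ B x ∧ w ∈ B x) ∧
  (∀ v : V, (T.induce {x | v ∈ B x}).Connected)

/-- `G` has a tree decomposition of width at most `k`. -/
def HasTDWidthLE {V : Type*} (G : SimpleGraph V) (k : ℕ) : Prop :=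
  ∃ (ι : Type) (T : SimpleGraph ι) (B : ι → Set V),
    IsTreeDecomp G T B ∧ ∀ x, (B x).ncard ≤ k + 1

/-- Treewidth of `G`. -/
noncomputable def treewidth {V : Type*} (G : SimpleGraph V) : ℕ :=
  sInf {k | HasTDWidthLE G k}

/-- Two vertex sets touch: they intersect or an edge joins them. -/
def Touches {V : Type*} (G : SimpleGraph V) (A B : Set V) : Prop :=
  (A ∩ B).Nonempty ∨ ∃ a ∈ A, ∃ b ∈ B, G.Adj a b

/-- A bramble: a set of connected subgraphs (given by vertex sets) that pairwise touch. -/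
def IsBramble {V : Type*} (G : SimpleGraph V) (𝓑 : Set (Set V)) : Prop :=
  (∀ A ∈ 𝓑, (G.induce A).Connected) ∧ ∀ A ∈ 𝓑, ∀ B ∈ 𝓑, Touches G A B

/-- `S` hits every element of `𝓑`. -/
def IsHitting {V : Type*} (𝓑 : Set (Set V)) (S : Set V) : Prop :=
  ∀ A ∈ 𝓑, (S ∩ A).Nonempty

/-- The order of a bramble: minimum size of a hitting set. -/
noncomputable def brambleOrder {V : Type*} (𝓑 : Set (Set V)) : ℕ :=
  sInf {n | ∃ S : Set V, IsHitting 𝓑 S ∧ S.ncard = n}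

/-- The bramble number: maximum order of a bramble. -/
noncomputable def brambleNumber {V : Type*} (G : SimpleGraph V) : ℕ :=
  sSup {n | ∃ 𝓑 : Set (Set V), IsBramble G 𝓑 ∧ brambleOrder 𝓑 = n}

/-- A tangle: connected subgraphs such that any three share a vertex or
meet a common edge's endpoints. -/
def IsTangle {V : Type*} (G : SimpleGraph V) (τ : Set (Set V)) : Prop :=
  (∀ A ∈ τ, (G.induce A).Connected) ∧
  ∀ A ∈ τ, ∀ B ∈ τ, ∀ C ∈ τ,
    (∃ v, v ∈ A ∩ B ∩ C) ∨
    ∃ u v, G.Adj u v ∧ (u ∈ A ∨ v ∈ A) ∧ (u ∈ B ∨ v ∈ B) ∧ (u ∈ C ∨ v ∈ C)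

/-- The tangle number: maximum order of a tangle. -/
noncomputable def tangleNumber {V : Type*} (G : SimpleGraph V) : ℕ :=
  sSup {n | ∃ τ : Set (Set V), IsTangle G τ ∧ brambleOrder τ = n}

/-- `G - X` : delete the vertices of `X` (kept on the same vertex type,
vertices of `X` become isolated). -/
def delVerts {V : Type*} (G : SimpleGraph V) (X : Set V) : SimpleGraph V where
  Adj a b := G.Adj a b ∧ a ∉ X ∧ b ∉ X
  symm := by
    constructor
    intro a b h
    exact ⟨h.1.symm, h.2.2, h.2.1⟩
  loopless := by
    constructor
    intro a h
    exact G.loopless.irrefl a h.1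

/-- The vertex set of the component of `G - X` containing `v`. -/
def comp {V : Type*} (G : SimpleGraph V) (X : Set V) (v : V) : Set V :=
  {w | (delVerts G X).Reachable v w}

/-- `X` is a `(k, S, c)`-separator of `G`. -/
def IsSeparator {V : Type*} (G : SimpleGraph V) (k : ℕ) (S : Set V) (c : ℝ) (X : Set V) : Prop :=
  X.ncard ≤ k ∧
  ∀ v ∉ X, ((comp G X v ∩ S).ncard : ℝ) ≤ c * ((S \ X).ncard : ℝ)

/-- The separation number `sep_c(G)`. -/
noncomputable def sepNum {V : Type*} (G : SimpleGraph V) (c : ℝ) : ℕ :=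
  sInf {k | ∀ S : Set V, ∃ X : Set V, IsSeparator G k S c X}

/-- `X` is a `(k, S, c)*`-separator of `G`. -/
def IsStarSeparator {V : Type*} (G : SimpleGraph V) (k : ℕ) (S : Set V) (c : ℝ) (X : Set V) :
    Prop :=
  X.ncard ≤ k ∧
  ∀ v ∉ X, ((comp G X v ∩ (S \ X)).ncard : ℝ) ≤ c * (S.ncard : ℝ)

/-- The variant separation number `sep*_c(G)`. -/
noncomputable def sepStarNum {V : Type*} (G : SimpleGraph V) (c : ℝ) : ℕ :=
  sInf {k | ∀ S : Set V, ∃ X : Set V, IsStarSeparator G k S c X}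

/-- `G` has a branch decomposition of width at most `w`. -/
def HasBDWidthLE {V : Type*} (G : SimpleGraph V) (w : ℕ) : Prop :=
  ∃ (ι : Type) (_ : Finite ι) (T : SimpleGraph ι), T.IsTree ∧
    (∀ x : ι, (T.neighborSet x).ncard = 3 ∨ (T.neighborSet x).ncard = 1) ∧
    ∃ θ : G.edgeSet ≃ {x : ι // (T.neighborSet x).ncard = 1},
      ∀ a b : ι, T.Adj a b →
        {v : V | ∃ e₁ e₂ : G.edgeSet, v ∈ e₁.1 ∧ v ∈ e₂.1 ∧
          ¬ (T.deleteEdges {s(a, b)}).Reachable (θ e₁).1 (θ e₂).1}.ncard ≤ w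

/-- Branchwidth of `G` (`0` if no branch decomposition exists). -/
noncomputable def branchwidth {V : Type*} (G : SimpleGraph V) : ℕ :=
  sInf {w | HasBDWidthLE G w}

/-- `H` is a minor of `G`, via a model of branch sets. -/
def IsMinor {W V : Type*} (H : SimpleGraph W) (G : SimpleGraph V) : Prop :=
  ∃ f : W → Set V,
    (∀ w, (G.induce (f w)).Connected) ∧
    (∀ a b, a ≠ b → Disjoint (f a) (f b)) ∧
    ∀ a b, H.Adj a b → ∃ u ∈ f a, ∃ v ∈ f b, G.Adj u v

/-- The lexicographic product `T[K_k]`. -/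
def treeLex {ι : Type*} (T : SimpleGraph ι) (k : ℕ) : SimpleGraph (ι × Fin k) where
  Adj a b := T.Adj a.1 b.1 ∨ (a.1 = b.1 ∧ a.2 ≠ b.2)
  symm := by
    constructor
    rintro a b (h | ⟨h1, h2⟩)
    · exact Or.inl h.symm
    · exact Or.inr ⟨h1.symm, h2.symm⟩
  loopless := by
    constructor
    rintro a (h | ⟨h1, h2⟩)
    · exact T.loopless.irrefl _ h
    · exact h2 rfl

/-- The lexicographic tree product number. -/
noncomputable def ltp {V : Type*} (G : SimpleGraph V) : ℕ :=
  sInf {k | ∃ (ι : Type) (T : SimpleGraph ι), T.IsTree ∧ IsMinor G (treeLex T k)}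

/-- The cartesian tree product number. -/
noncomputable def ctp {V : Type*} (G : SimpleGraph V) : ℕ :=
  sInf {k | ∃ (ι : Type) (T : SimpleGraph ι), T.IsTree ∧
    IsMinor G (T.boxProd (completeGraph (Fin k)))}

/-- `S` is `k`-linked in `G`. -/
def IsLinked {V : Type*} (G : SimpleGraph V) (k : ℕ) (S : Set V) : Prop :=
  ∀ X : Set V, X.ncard < k → ∃ v, v ∉ X ∧ S.ncard < 2 * (comp G X v ∩ S).ncard

/-- The linkedness of `G`: maximum `k ≥ 1` for which `G` has a `k`-linked set. -/
noncomputable def linkedness {V : Type*} (G : SimpleGraph V) : ℕ :=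
  sSup {k | 0 < k ∧ ∃ S : Set V, IsLinked G k S}

/-- `S` is well-linked in `G`. -/
def WellLinked {V : Type*} (G : SimpleGraph V) (S : Set V) : Prop :=
  ∀ A B : Finset V, ↑A ⊆ S → ↑B ⊆ S → A.card = B.card →
    ∃ (σ : A ≃ B) (p : ∀ a : A, G.Walk (a : V) ((σ a : V))),
      (∀ a, (p a).IsPath) ∧
      ∀ a a' : A, a ≠ a' → ∀ v, v ∈ (p a).support → v ∉ (p a').support

/-- `S` is externally-well-linked in `G`: the linking paths can be chosen with
no internal vertices in `S`. -/
def ExternallyWellLinked {V : Type*} (G : SimpleGraph V) (S : Set V) : Prop :=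
  ∀ A B : Finset V, ↑A ⊆ S → ↑B ⊆ S → A.card = B.card →
    ∃ (σ : A ≃ B) (p : ∀ a : A, G.Walk (a : V) ((σ a : V))),
      (∀ a, (p a).IsPath) ∧
      (∀ a a' : A, a ≠ a' → ∀ v, v ∈ (p a).support → v ∉ (p a').support) ∧
      ∀ a : A, ∀ v ∈ (p a).support, v ∈ S → v = (a : V) ∨ v = ((σ a : V))

/-- The well-linked number of `G`. -/
noncomputable def wellLinkedNum {V : Type*} (G : SimpleGraph V) : ℕ :=
  sSup {n | ∃ S : Set V, WellLinked G S ∧ S.ncard = n}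

/-- A graph is chordal if every cycle of length at least 4 has a chord
(equivalently, there is no induced cycle of length at least four). -/
def Chordal {V : Type*} (H : SimpleGraph V) : Prop :=
  ∀ (v : V) (c : H.Walk v v), c.IsCycle → 4 ≤ c.length →
    ∃ a b, a ∈ c.support ∧ b ∈ c.support ∧ H.Adj a b ∧ s(a, b) ∉ c.edges

/-- `G` is a `k`-tree. -/
inductive IsKTree (k : ℕ) : ∀ (V : Type), SimpleGraph V → Prop
  | base (V : Type) (G : SimpleGraph V) (h : Nonempty (G ≃g completeGraph (Fin (k + 1)))) :
      IsKTree k V G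
  | step (V : Type) (G : SimpleGraph V) (v : V)
      (hdeg : (G.neighborSet v).ncard = k)
      (hcl : G.IsClique (G.neighborSet v))
      (h : IsKTree k ↥{u : V | u ≠ v} (G.induce {u : V | u ≠ v})) :
      IsKTree k V G

/-- The `k × k` grid graph. -/
def grid (k : ℕ) : SimpleGraph (Fin k × Fin k) where
  Adj a b := (a.1 = b.1 ∧ (a.2.val + 1 = b.2.val ∨ b.2.val + 1 = a.2.val)) ∨
             (a.2 = b.2 ∧ (a.1.val + 1 = b.1.val ∨ b.1.val + 1 = a.1.val))
  symm := by
    constructor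
    rintro a b (⟨h1, h2⟩ | ⟨h1, h2⟩)
    · exact Or.inl ⟨h1.symm, h2.symm⟩
    · exact Or.inr ⟨h1.symm, h2.symm⟩
  loopless := by
    constructor
    rintro a (⟨h1, h2⟩ | ⟨h1, h2⟩) <;> omega



section Aux

variable {V ι : Type*}

/-- Connectivity of a vertex set via walks staying inside the set. -/
def Conn (T : SimpleGraph ι) (S : Set ι) : Prop :=
  S.Nonempty ∧ ∀ a ∈ S, ∀ b ∈ S, ∃ p : T.Walk a b, ∀ v ∈ p.support, v ∈ S

lemma conn_of_induce {T : SimpleGraph ι} {S : Set ι} (h : (T.induce S).Connected) : Conn T S := by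
  obtain ⟨s0⟩ := h.nonempty
  have hpre := h.preconnected
  refine ⟨⟨s0.1, s0.2⟩, ?_⟩
  intro a ha b hb
  obtain ⟨q⟩ := hpre ⟨a, ha⟩ ⟨b, hb⟩
  refine ⟨q.map (SimpleGraph.Embedding.induce S).toHom, ?_⟩
  intro v hv
  have hv : v ∈ q.support.map (SimpleGraph.Embedding.induce (G := T) S).toHom := by
    rw [← SimpleGraph.Walk.support_map]; exact hv
  obtain ⟨u, _, rfl⟩ := List.mem_map.1 hv
  exact u.2

lemma reachable_induce_of_walk {T : SimpleGraph ι} {S : Set ι} :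
    ∀ {a b : ι} (p : T.Walk a b) (_ : ∀ v ∈ p.support, v ∈ S) (ha : a ∈ S) (hb : b ∈ S),
    (T.induce S).Reachable ⟨a, ha⟩ ⟨b, hb⟩ := by
  intro a b p
  induction p with
  | nil => intro _ ha hb; exact Reachable.refl _
  | @cons a u b h p ih =>
    intro hsup ha hb
    have hu : u ∈ S := hsup u (by simp [Walk.support_cons, Walk.start_mem_support])
    have h1 : (T.induce S).Adj ⟨a, ha⟩ ⟨u, hu⟩ := h
    exact h1.reachable.trans (ih (fun v hv => hsup v (by simp [Walk.support_cons, hv])) hu hb)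

lemma induce_connected_of_conn {T : SimpleGraph ι} {S : Set ι} (h : Conn T S) :
    (T.induce S).Connected := by
  obtain ⟨⟨s0, hs0⟩, hwalk⟩ := h
  rw [connected_iff]
  refine ⟨?_, ⟨⟨s0, hs0⟩⟩⟩
  rintro ⟨a, ha⟩ ⟨b, hb⟩
  obtain ⟨p, hp⟩ := hwalk a ha b hb
  exact reachable_induce_of_walk p hp ha hb

lemma path_subset_of_conn {T : SimpleGraph ι} (hT : T.IsTree) {S : Set ι} (hS : Conn T S)
    {a b : ι} (ha : a ∈ S) (hb : b ∈ S) {p : T.Walk a b} (hp : p.IsPath) :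
    ∀ v ∈ p.support, v ∈ S := by
  classical
  obtain ⟨q, hq⟩ := hS.2 a ha b hb
  have hEq : p = q.toPath.1 := (hT.existsUnique_path a b).unique hp q.toPath.2
  intro v hv
  rw [hEq] at hv
  exact hq v (Walk.support_bypass_subset q hv)

lemma exists_first {T : SimpleGraph ι} (Sset : Set ι) :
    ∀ {d a : ι} (p : T.Walk d a), p.IsPath → a ∈ Sset →
    ∃ m, m ∈ Sset ∧ ∃ q : T.Walk d m, q.IsPath ∧
      (∀ v ∈ q.support, v ∈ p.support) ∧ ∀ v ∈ q.support, v ∈ Sset → v = m := by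
  intro d a p
  induction p with
  | nil =>
    intro _ ha
    exact ⟨_, ha, Walk.nil, Walk.IsPath.nil, by simp, by simp⟩
  | @cons d u a h p ih =>
    intro hp ha
    by_cases hd : d ∈ Sset
    · exact ⟨d, hd, Walk.nil, Walk.IsPath.nil, by simp, by simp⟩
    · obtain ⟨m, hm, r, hr, hsub, hfirst⟩ := ih hp.of_cons ha
      have hdr : d ∉ r.support := fun hmem =>
        ((Walk.cons_isPath_iff h p).1 hp).2 (hsub d hmem)
      refine ⟨m, hm, Walk.cons h r, hr.cons hdr, ?_, ?_⟩
      · intro v hv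
        rw [Walk.support_cons] at hv ⊢
        rcases List.mem_cons.1 hv with rfl | hv
        · exact List.mem_cons_self
        · exact List.mem_cons_of_mem _ (hsub v hv)
      · intro v hv hvS
        rw [Walk.support_cons] at hv
        rcases List.mem_cons.1 hv with rfl | hv
        · exact absurd hvS hd
        · exact hfirst v hv hvS

lemma isPath_append_of {T : SimpleGraph ι} {d m b : ι} :
    ∀ (q : T.Walk d m) (r : T.Walk m b), q.IsPath → r.IsPath →
    (∀ v ∈ q.support, v ∈ r.support → v = m) → (q.append r).IsPath := by
  intro q
  induction q with
  | nil => intro r _ hr _; simpa using hr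
  | @cons d u m h q ih =>
    intro r hq hr hint
    rw [Walk.cons_append]
    have hq' : q.IsPath := hq.of_cons
    have hd : d ∉ q.support := ((Walk.cons_isPath_iff h q).1 hq).2
    have hqr : (q.append r).IsPath := by
      refine ih r hq' hr ?_
      intro v hv hvr
      exact hint v (by rw [Walk.support_cons]; exact List.mem_cons_of_mem _ hv) hvr
    refine hqr.cons ?_
    intro hmem
    rw [Walk.support_append] at hmem
    rcases List.mem_append.1 hmem with hmem | hmem
    · exact hd hmem
    · have hdr : d ∈ r.support := List.mem_of_mem_tail hmem
      have hdm : d = m := hint d (Walk.start_mem_support _) hdr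
      subst hdm
      have : r.support = d :: r.support.tail := Walk.support_eq_cons r
      have hnd := hr.support_nodup
      rw [this] at hnd
      exact (List.nodup_cons.1 hnd).1 hmem

lemma tree_median {T : SimpleGraph ι} (hT : T.IsTree) {a b d : ι}
    {pab : T.Walk a b} (hab : pab.IsPath) {pda : T.Walk d a} (hda : pda.IsPath)
    {pdb : T.Walk d b} (hdb : pdb.IsPath) :
    ∃ m, m ∈ pab.support ∧ m ∈ pda.support ∧ m ∈ pdb.support := by
  classical
  obtain ⟨m, hm, q, hq, hqsub, hfirst⟩ :=
    exists_first {v | v ∈ pab.support} pda hda (pab.start_mem_support)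
  have hmab : m ∈ pab.support := hm
  set r := pab.dropUntil m hmab with hr
  have hrsub : ∀ v ∈ r.support, v ∈ pab.support := fun v hv =>
    Walk.support_dropUntil_subset pab hmab hv
  have hrpath : r.IsPath := hab.dropUntil hmab
  have hw : (q.append r).IsPath := by
    refine isPath_append_of q r hq hrpath ?_
    intro v hv hvr
    exact hfirst v hv (hrsub v hvr)
  have hEq : pdb = q.append r := (hT.existsUnique_path d b).unique hdb hw
  refine ⟨m, hmab, hqsub m (Walk.end_mem_support q), ?_⟩
  rw [hEq, Walk.support_append]
  exact List.mem_append.2 (Or.inl (Walk.end_mem_support q))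


lemma conn_inter {T : SimpleGraph ι} (hT : T.IsTree) {S1 S2 : Set ι}
    (h1 : Conn T S1) (h2 : Conn T S2) (hne : (S1 ∩ S2).Nonempty) : Conn T (S1 ∩ S2) := by
  refine ⟨hne, ?_⟩
  rintro a ⟨ha1, ha2⟩ b ⟨hb1, hb2⟩
  obtain ⟨p, hp, -⟩ := hT.existsUnique_path a b
  exact ⟨p, fun v hv => ⟨path_subset_of_conn hT h1 ha1 hb1 hp v hv,
    path_subset_of_conn hT h2 ha2 hb2 hp v hv⟩⟩

lemma helly3 {T : SimpleGraph ι} (hT : T.IsTree) {S1 S2 S3 : Set ι}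
    (h1 : Conn T S1) (h2 : Conn T S2) (h3 : Conn T S3)
    (h12 : (S1 ∩ S2).Nonempty) (h13 : (S1 ∩ S3).Nonempty) (h23 : (S2 ∩ S3).Nonempty) :
    (S1 ∩ S2 ∩ S3).Nonempty := by
  obtain ⟨a, ha1, ha3⟩ := h13
  obtain ⟨b, hb2, hb3⟩ := h23
  obtain ⟨c, hc1, hc2⟩ := h12
  obtain ⟨pab, hab, -⟩ := hT.existsUnique_path a b
  obtain ⟨pca, hca, -⟩ := hT.existsUnique_path c a
  obtain ⟨pcb, hcb, -⟩ := hT.existsUnique_path c b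
  obtain ⟨m, hmab, hmca, hmcb⟩ := tree_median hT hab hca hcb
  exact ⟨m, ⟨⟨path_subset_of_conn hT h1 hc1 ha1 hca m hmca,
    path_subset_of_conn hT h2 hc2 hb2 hcb m hmcb⟩,
    path_subset_of_conn hT h3 ha3 hb3 hab m hmab⟩⟩

lemma helly_aux {T : SimpleGraph ι} (hT : T.IsTree) :
    ∀ (n : ℕ) (F : Set (Set ι)), F.Finite → F.ncard ≤ n → (∀ s ∈ F, Conn T s) →
    (∀ s ∈ F, ∀ t ∈ F, (s ∩ t).Nonempty) → F.Nonempty → ∃ x, ∀ s ∈ F, x ∈ s := by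
  intro n
  induction n with
  | zero =>
    intro F hFin hcard _ _ hne
    exact absurd ((Set.ncard_eq_zero hFin).1 (Nat.le_zero.1 hcard)) hne.ne_empty
  | succ n ih =>
    intro F hFin hcard hconn hpair hne
    obtain ⟨s, hs⟩ := hne
    by_cases h1 : F ⊆ {s}
    · obtain ⟨x, hx⟩ := (hconn s hs).1
      exact ⟨x, fun t ht => by rw [h1 ht]; exact hx⟩
    · obtain ⟨t, ht, hts⟩ : ∃ t ∈ F, t ≠ s := by
        by_contra h
        push_neg at h
        exact h1 fun u hu => h u hu
      set F' : Set (Set ι) := insert (s ∩ t) ((F \ {s}) \ {t}) with hF'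
      have hF'fin : F'.Finite := Set.Finite.insert _ ((hFin.diff).diff)
      have hcard2 : ((F \ {s}) \ {t}).ncard = F.ncard - 2 := by
        rw [Set.ncard_diff_singleton_of_mem (show t ∈ F \ {s} from ⟨ht, hts⟩),
          Set.ncard_diff_singleton_of_mem hs]
        omega
      have hge2 : 2 ≤ F.ncard := by
        have : ({t, s} : Set (Set ι)) ⊆ F := by
          rintro u (rfl | rfl) <;> assumption
        have h2 : ({t, s} : Set (Set ι)).ncard = 2 := Set.ncard_pair hts
        calc 2 = ({t, s} : Set (Set ι)).ncard := h2.symm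
          _ ≤ F.ncard := Set.ncard_le_ncard this hFin
      have hF'card : F'.ncard ≤ n := by
        have h3 := Set.ncard_insert_le (s ∩ t) ((F \ {s}) \ {t})
        rw [← hF'] at h3
        omega
      have hmemF : ∀ u ∈ F', u = s ∩ t ∨ u ∈ F := by
        rintro u (rfl | ⟨⟨hu, -⟩, -⟩)
        · exact Or.inl rfl
        · exact Or.inr hu
      have hst : (s ∩ t).Nonempty := hpair s hs t ht
      have hconn' : ∀ u ∈ F', Conn T u := by
        intro u hu
        rcases hmemF u hu with rfl | hu
        · exact conn_inter hT (hconn s hs) (hconn t ht) hst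
        · exact hconn u hu
      have hpair' : ∀ u ∈ F', ∀ v ∈ F', (u ∩ v).Nonempty := by
        have key : ∀ v ∈ F, ((s ∩ t) ∩ v).Nonempty := fun v hv =>
          helly3 hT (hconn s hs) (hconn t ht) (hconn v hv) (hpair s hs t ht)
            (hpair s hs v hv) (hpair t ht v hv)
        intro u hu v hv
        rcases hmemF u hu with rfl | hu <;> rcases hmemF v hv with rfl | hv
        · exact hst.mono (Set.subset_inter Set.Subset.rfl Set.Subset.rfl)
        · exact key v hv
        · obtain ⟨x, hx1, hx2⟩ := key u hu
          exact ⟨x, hx2, hx1⟩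
        · exact hpair u hu v hv
      obtain ⟨x, hx⟩ := ih F' hF'fin hF'card hconn' hpair' ⟨_, Set.mem_insert _ _⟩
      have hxst : x ∈ s ∩ t := hx _ (Set.mem_insert _ _)
      refine ⟨x, ?_⟩
      intro u hu
      by_cases hus : u = s
      · exact hus ▸ hxst.1
      by_cases hut : u = t
      · exact hut ▸ hxst.2
      · exact hx u (Set.mem_insert_of_mem _ ⟨⟨hu, hus⟩, hut⟩)


section TD
variable {G : SimpleGraph V} {T : SimpleGraph ι} {B : ι → Set V}

/-- trace of a vertex set on the tree -/
def trace (B : ι → Set V) (A : Set V) : Set ι := {x | ∃ v ∈ A, v ∈ B x}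

lemma trace_walk (hTD : IsTreeDecomp G T B) {A : Set V} :
    ∀ {v w : V} (p : G.Walk v w), (∀ u ∈ p.support, u ∈ A) →
    ∀ x, v ∈ B x → ∀ y, w ∈ B y → ∃ q : T.Walk x y, ∀ z ∈ q.support, z ∈ trace B A := by
  intro v w p
  induction p with
  | @nil v0 =>
    intro hsup x hx y hy
    have hv : v0 ∈ A := hsup _ (Walk.start_mem_support _)
    have hc : Conn T {z | v0 ∈ B z} := conn_of_induce (hTD.2.2 v0)
    obtain ⟨q, hq⟩ := hc.2 x hx y hy
    exact ⟨q, fun z hz => ⟨v0, hv, hq z hz⟩⟩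
  | @cons v u w h p ih =>
    intro hsup x hx y hy
    have hv : v ∈ A := hsup v (by rw [Walk.support_cons]; exact List.mem_cons_self)
    obtain ⟨z0, hvz, huz⟩ := hTD.2.1 v u h
    have hc : Conn T {z | v ∈ B z} := conn_of_induce (hTD.2.2 v)
    obtain ⟨q1, hq1⟩ := hc.2 x hx z0 hvz
    obtain ⟨q2, hq2⟩ := ih
      (fun u' hu' => hsup u' (by rw [Walk.support_cons]; exact List.mem_cons_of_mem _ hu'))
      z0 huz y hy
    refine ⟨q1.append q2, ?_⟩
    intro z hz
    rw [Walk.support_append] at hz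
    rcases List.mem_append.1 hz with hz | hz
    · exact ⟨v, hv, hq1 z hz⟩
    · exact hq2 z (List.mem_of_mem_tail hz)

lemma trace_conn (hTD : IsTreeDecomp G T B) {A : Set V} (hA : (G.induce A).Connected) :
    Conn T (trace B A) := by
  obtain ⟨⟨a0, ha0⟩, hAc⟩ := conn_of_induce hA
  constructor
  · obtain ⟨⟨x0, hx0⟩, -⟩ := conn_of_induce (hTD.2.2 a0)
    exact ⟨x0, a0, ha0, hx0⟩
  · rintro x ⟨v, hv, hvx⟩ y ⟨w, hw, hwy⟩
    obtain ⟨p, hp⟩ := hAc v hv w hw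
    exact trace_walk hTD p hp x hvx y hwy

lemma exists_bag_hitting [Finite V] (hTD : IsTreeDecomp G T B)
    {𝓑 : Set (Set V)} (hBr : IsBramble G 𝓑) : ∃ x, IsHitting 𝓑 (B x) := by
  have hι : Nonempty ι := hTD.1.isConnected.nonempty
  rcases Set.eq_empty_or_nonempty 𝓑 with rfl | h𝓑
  · exact ⟨Classical.arbitrary ι, fun A hA => absurd hA (Set.notMem_empty A)⟩
  · set F : Set (Set ι) := (fun A => trace B A) '' 𝓑 with hF
    have hFfin : F.Finite := (Set.toFinite 𝓑).image _
    have hconn : ∀ s ∈ F, Conn T s := by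
      rintro s ⟨A, hA, rfl⟩
      exact trace_conn hTD (hBr.1 A hA)
    have hpair : ∀ s ∈ F, ∀ t ∈ F, (s ∩ t).Nonempty := by
      rintro s ⟨A, hA, rfl⟩ t ⟨A', hA', rfl⟩
      rcases hBr.2 A hA A' hA' with ⟨v, hv1, hv2⟩ | ⟨a, ha, b, hb, hab⟩
      · obtain ⟨⟨x0, hx0⟩, -⟩ := conn_of_induce (hTD.2.2 v)
        exact ⟨x0, ⟨v, hv1, hx0⟩, ⟨v, hv2, hx0⟩⟩
      · obtain ⟨x, hax, hbx⟩ := hTD.2.1 a b hab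
        exact ⟨x, ⟨a, ha, hax⟩, ⟨b, hb, hbx⟩⟩
    obtain ⟨x, hx⟩ := helly_aux hTD.1 F.ncard F hFfin le_rfl hconn hpair (h𝓑.image _)
    refine ⟨x, ?_⟩
    intro A hA
    obtain ⟨v, hv, hvx⟩ := hx (trace B A) ⟨A, hA, rfl⟩
    exact ⟨v, hvx, hv⟩

end TD

lemma trivial_TD {V : Type} [Fintype V] (G : SimpleGraph V) : HasTDWidthLE G (Fintype.card V) := by
  refine ⟨Unit, ⊥, fun _ => Set.univ, ⟨⟨?_, ?_⟩, ?_, ?_⟩, ?_⟩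
  · exact ⟨fun a b => by cases a; cases b; exact Reachable.refl _⟩
  · intro v c hc
    cases c with
    | nil => exact hc.ne_nil rfl
    | cons h _ => exact h
  · intro v w h
    exact ⟨(), Set.mem_univ _, Set.mem_univ _⟩
  · intro v
    haveI : Nonempty ↑{x : Unit | v ∈ (fun _ => (Set.univ : Set V)) x} :=
      ⟨⟨(), Set.mem_univ v⟩⟩
    refine ⟨fun a b => ?_⟩
    have : a = b := Subsingleton.elim a b
    subst this
    exact Reachable.refl _
  · intro x
    rw [Set.ncard_univ, Nat.card_eq_fintype_card]
    omega

lemma minor_TD_aux {W : Type*} {V : Type} [Fintype V] {H : SimpleGraph W} {G : SimpleGraph V}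
    (f : W → Set V) (hf1 : ∀ w, (G.induce (f w)).Connected)
    (hf2 : ∀ a b, a ≠ b → Disjoint (f a) (f b))
    (hf3 : ∀ a b, H.Adj a b → ∃ u ∈ f a, ∃ v ∈ f b, G.Adj u v)
    {n : ℕ} (h : HasTDWidthLE G n) : HasTDWidthLE H n := by
  obtain ⟨ι, T, B, hTD, hW⟩ := h
  refine ⟨ι, T, fun x => {w | ∃ v ∈ f w, v ∈ B x}, ⟨hTD.1, ?_, ?_⟩, ?_⟩
  · intro a b hab
    obtain ⟨u, hu, v, hv, huv⟩ := hf3 a b hab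
    obtain ⟨x, hux, hvx⟩ := hTD.2.1 u v huv
    exact ⟨x, ⟨u, hu, hux⟩, ⟨v, hv, hvx⟩⟩
  · intro w
    exact induce_connected_of_conn (trace_conn hTD (hf1 w))
  · intro x
    show ({w | ∃ v ∈ f w, v ∈ B x}).ncard ≤ n + 1
    rcases isEmpty_or_nonempty V with hV | hV
    · have : {w | ∃ v ∈ f w, v ∈ B x} = ∅ := by
        ext w; simp only [Set.mem_setOf_eq, Set.mem_empty_iff_false, iff_false]
        rintro ⟨v, -⟩; exact hV.elim v
      rw [this]; simp
    · classical
      have := hV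
      refine le_trans (le_trans (Set.ncard_le_ncard_of_injOn
        (fun w => if hw : (f w ∩ B x).Nonempty then hw.choose else Classical.arbitrary V)
        ?_ ?_ (Set.toFinite _)) le_rfl) (hW x)
      · rintro w ⟨v, hv1, hv2⟩
        have hw : (f w ∩ B x).Nonempty := ⟨v, hv1, hv2⟩
        simp only [dif_pos hw]
        exact hw.choose_spec.2
      · rintro w ⟨v, hv1, hv2⟩ w' ⟨v', hv1', hv2'⟩ heq
        dsimp only at heq
        have hw : (f w ∩ B x).Nonempty := ⟨v, hv1, hv2⟩
        have hw' : (f w' ∩ B x).Nonempty := ⟨v', hv1', hv2'⟩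
        rw [dif_pos hw, dif_pos hw'] at heq
        by_contra hne
        exact Set.disjoint_left.1 (hf2 w w' hne) hw.choose_spec.1
          (heq ▸ hw'.choose_spec.1)


lemma grid_row_walk (k : ℕ) (i : Fin k) :
    ∀ (d : ℕ) (a b : Fin k), a.val + d = b.val →
    ∃ p : (grid k).Walk (i, a) (i, b),
      ∀ v ∈ p.support, v.1 = i ∧ a.val ≤ v.2.val ∧ v.2.val ≤ b.val := by
  intro d
  induction d with
  | zero =>
    intro a b h
    have : a = b := Fin.ext (by omega)
    subst this
    refine ⟨Walk.nil, ?_⟩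
    intro v hv
    rw [Walk.support_nil, List.mem_singleton] at hv
    subst hv
    exact ⟨rfl, le_rfl, le_rfl⟩
  | succ d ih =>
    intro a b h
    have ha1 : a.val + 1 < k := by have := b.isLt; omega
    set a' : Fin k := ⟨a.val + 1, ha1⟩ with ha'
    have adj : (grid k).Adj (i, a) (i, a') := Or.inl ⟨rfl, Or.inl rfl⟩
    obtain ⟨p, hp⟩ := ih a' b (by simp [ha']; omega)
    refine ⟨Walk.cons adj p, ?_⟩
    intro v hv
    rw [Walk.support_cons] at hv
    rcases List.mem_cons.1 hv with rfl | hv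
    · refine ⟨rfl, le_rfl, ?_⟩
      show a.val ≤ b.val
      omega
    · obtain ⟨h1, h2, h3⟩ := hp v hv
      have h2' : a.val + 1 ≤ v.2.val := h2
      exact ⟨h1, by omega, h3⟩

lemma grid_col_walk (k : ℕ) (j : Fin k) :
    ∀ (d : ℕ) (a b : Fin k), a.val + d = b.val →
    ∃ p : (grid k).Walk (a, j) (b, j),
      ∀ v ∈ p.support, v.2 = j ∧ a.val ≤ v.1.val ∧ v.1.val ≤ b.val := by
  intro d
  induction d with
  | zero =>
    intro a b h
    have : a = b := Fin.ext (by omega)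
    subst this
    refine ⟨Walk.nil, ?_⟩
    intro v hv
    rw [Walk.support_nil, List.mem_singleton] at hv
    subst hv
    exact ⟨rfl, le_rfl, le_rfl⟩
  | succ d ih =>
    intro a b h
    have ha1 : a.val + 1 < k := by have := b.isLt; omega
    set a' : Fin k := ⟨a.val + 1, ha1⟩ with ha'
    have adj : (grid k).Adj (a, j) (a', j) := Or.inr ⟨rfl, Or.inl rfl⟩
    obtain ⟨p, hp⟩ := ih a' b (by simp [ha']; omega)
    refine ⟨Walk.cons adj p, ?_⟩
    intro v hv
    rw [Walk.support_cons] at hv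
    rcases List.mem_cons.1 hv with rfl | hv
    · refine ⟨rfl, le_rfl, ?_⟩
      show a.val ≤ b.val
      omega
    · obtain ⟨h1, h2, h3⟩ := hp v hv
      have h2' : a.val + 1 ≤ v.1.val := h2
      exact ⟨h1, by omega, h3⟩

lemma grid_row_walk2 (k : ℕ) (i a b : Fin k) :
    ∃ p : (grid k).Walk (i, a) (i, b),
      ∀ v ∈ p.support, v.1 = i ∧ v.2.val ≤ max a.val b.val := by
  rcases le_total a.val b.val with h | h
  · obtain ⟨p, hp⟩ := grid_row_walk k i (b.val - a.val) a b (by omega)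
    exact ⟨p, fun v hv => ⟨(hp v hv).1, by have := (hp v hv).2.2; omega⟩⟩
  · obtain ⟨p, hp⟩ := grid_row_walk k i (a.val - b.val) b a (by omega)
    refine ⟨p.reverse, fun v hv => ?_⟩
    rw [Walk.support_reverse, List.mem_reverse] at hv
    exact ⟨(hp v hv).1, by have := (hp v hv).2.2; omega⟩

lemma grid_col_walk2 (k : ℕ) (j a b : Fin k) :
    ∃ p : (grid k).Walk (a, j) (b, j),
      ∀ v ∈ p.support, v.2 = j ∧ v.1.val ≤ max a.val b.val := by
  rcases le_total a.val b.val with h | h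
  · obtain ⟨p, hp⟩ := grid_col_walk k j (b.val - a.val) a b (by omega)
    exact ⟨p, fun v hv => ⟨(hp v hv).1, by have := (hp v hv).2.2; omega⟩⟩
  · obtain ⟨p, hp⟩ := grid_col_walk k j (a.val - b.val) b a (by omega)
    refine ⟨p.reverse, fun v hv => ?_⟩
    rw [Walk.support_reverse, List.mem_reverse] at hv
    exact ⟨(hp v hv).1, by have := (hp v hv).2.2; omega⟩

def cross (k : ℕ) (i j : Fin k) : Set (Fin k × Fin k) :=
  {p | (p.1 = i ∧ p.2.val < k - 1) ∨ (p.2 = j ∧ p.1.val < k - 1)}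
def botRow (k : ℕ) : Set (Fin k × Fin k) := {p | p.1.val = k - 1}
def rightCol (k : ℕ) : Set (Fin k × Fin k) := {p | p.2.val = k - 1 ∧ p.1.val ≠ k - 1}
def gridBramble (k : ℕ) : Set (Set (Fin k × Fin k)) :=
  {A | ∃ i j : Fin k, i.val < k - 1 ∧ j.val < k - 1 ∧ A = cross k i j} ∪ {botRow k, rightCol k}

lemma cross_conn {k : ℕ} (hk : 2 ≤ k) {i j : Fin k} (hi : i.val < k - 1) (hj : j.val < k - 1) :
    Conn (grid k) (cross k i j) := by
  have hcenter : (i, j) ∈ cross k i j := Or.inl ⟨rfl, hj⟩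
  have walk_to_center : ∀ x ∈ cross k i j, ∃ p : (grid k).Walk x (i, j),
      ∀ v ∈ p.support, v ∈ cross k i j := by
    rintro ⟨r, c⟩ hx
    rcases hx with ⟨h1, h2⟩ | ⟨h1, h2⟩
    · have h1' : r = i := h1
      subst h1'
      have h2' : c.val < k - 1 := h2
      obtain ⟨p, hp⟩ := grid_row_walk2 k r c j
      exact ⟨p, fun v hv => Or.inl ⟨(hp v hv).1, by have := (hp v hv).2; omega⟩⟩
    · have h1' : c = j := h1
      subst h1'
      have h2' : r.val < k - 1 := h2
      obtain ⟨p, hp⟩ := grid_col_walk2 k c r i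
      exact ⟨p, fun v hv => Or.inr ⟨(hp v hv).1, by have := (hp v hv).2; omega⟩⟩
  refine ⟨⟨(i, j), hcenter⟩, ?_⟩
  intro a ha b hb
  obtain ⟨p, hp⟩ := walk_to_center a ha
  obtain ⟨q, hq⟩ := walk_to_center b hb
  refine ⟨p.append q.reverse, ?_⟩
  intro v hv
  rw [Walk.support_append] at hv
  rcases List.mem_append.1 hv with hv | hv
  · exact hp v hv
  · exact hq v (by
      have := List.mem_of_mem_tail hv
      rwa [Walk.support_reverse, List.mem_reverse] at this)

lemma botRow_conn {k : ℕ} (hk : 2 ≤ k) : Conn (grid k) (botRow k) := by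
  have hklt : k - 1 < k := by omega
  refine ⟨⟨(⟨k-1, hklt⟩, ⟨k-1, hklt⟩), rfl⟩, ?_⟩
  rintro ⟨r, c⟩ ha ⟨r', c'⟩ hb
  have h1 : r.val = k - 1 := ha
  have h2 : r'.val = k - 1 := hb
  have hr : r = r' := Fin.ext (by omega)
  subst hr
  obtain ⟨p, hp⟩ := grid_row_walk2 k r c c'
  exact ⟨p, fun v hv => by have := (hp v hv).1; show v.1.val = k - 1; rw [this]; exact ha⟩

lemma rightCol_conn {k : ℕ} (hk : 2 ≤ k) : Conn (grid k) (rightCol k) := by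
  have hklt : k - 1 < k := by omega
  have h0 : (0 : ℕ) < k := by omega
  refine ⟨⟨(⟨0, h0⟩, ⟨k-1, hklt⟩), by constructor <;> simp <;> omega⟩, ?_⟩
  rintro ⟨r, c⟩ ⟨ha1, ha2⟩ ⟨r', c'⟩ ⟨hb1, hb2⟩
  have ha1' : c.val = k - 1 := ha1
  have ha2' : r.val ≠ k - 1 := ha2
  have hb1' : c'.val = k - 1 := hb1
  have hb2' : r'.val ≠ k - 1 := hb2
  have hc : c = c' := Fin.ext (by omega)
  subst hc
  obtain ⟨p, hp⟩ := grid_col_walk2 k c r r'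
  refine ⟨p, fun v hv => ?_⟩
  obtain ⟨h1, h2⟩ := hp v hv
  have hrk : r.val < k := r.isLt
  have hrk' : r'.val < k := r'.isLt
  refine ⟨by rw [h1]; exact ha1', by omega⟩


lemma touches_symm {V : Type*} {G : SimpleGraph V} {A B : Set V} (h : Touches G A B) :
    Touches G B A := by
  rcases h with ⟨v, h1, h2⟩ | ⟨a, ha, b, hb, hab⟩
  · exact Or.inl ⟨v, h2, h1⟩
  · exact Or.inr ⟨b, hb, a, ha, hab.symm⟩

section touching
variable {k : ℕ}

lemma touches_cross_cross {i j i' j' : Fin k} (hj' : j'.val < k - 1) (hi : i.val < k - 1) :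
    Touches (grid k) (cross k i j) (cross k i' j') :=
  Or.inl ⟨(i, j'), Or.inl ⟨rfl, hj'⟩, Or.inr ⟨rfl, hi⟩⟩

lemma touches_cross_bot (hk : 2 ≤ k) {i j : Fin k} (hj : j.val < k - 1) :
    Touches (grid k) (cross k i j) (botRow k) := by
  have h2 : k - 2 < k := by omega
  have h1 : k - 1 < k := by omega
  refine Or.inr ⟨(⟨k-2, h2⟩, j), Or.inr ⟨rfl, by show k - 2 < k - 1; omega⟩,
    (⟨k-1, h1⟩, j), ?_, ?_⟩
  · show k - 1 = k - 1; rfl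
  · exact Or.inr ⟨rfl, Or.inl (by show k - 2 + 1 = k - 1; omega)⟩

lemma touches_cross_right (hk : 2 ≤ k) {i j : Fin k} (hi : i.val < k - 1) :
    Touches (grid k) (cross k i j) (rightCol k) := by
  have h2 : k - 2 < k := by omega
  have h1 : k - 1 < k := by omega
  refine Or.inr ⟨(i, ⟨k-2, h2⟩), Or.inl ⟨rfl, by show k - 2 < k - 1; omega⟩,
    (i, ⟨k-1, h1⟩), ⟨by show k - 1 = k - 1; rfl, by show i.val ≠ k - 1; omega⟩, ?_⟩
  exact Or.inl ⟨rfl, Or.inl (by show k - 2 + 1 = k - 1; omega)⟩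

lemma touches_bot_right (hk : 2 ≤ k) :
    Touches (grid k) (botRow k) (rightCol k) := by
  have h2 : k - 2 < k := by omega
  have h1 : k - 1 < k := by omega
  refine Or.inr ⟨(⟨k-1, h1⟩, ⟨k-1, h1⟩), by show k - 1 = k - 1; rfl,
    (⟨k-2, h2⟩, ⟨k-1, h1⟩), ⟨by show k - 1 = k - 1; rfl, by show k - 2 ≠ k - 1; omega⟩, ?_⟩
  exact Or.inr ⟨by show (⟨k-1, h1⟩ : Fin k) = ⟨k-1, h1⟩; rfl,
    Or.inr (by show k - 2 + 1 = k - 1; omega)⟩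

lemma gridBramble_isBramble (hk : 2 ≤ k) : IsBramble (grid k) (gridBramble k) := by
  have memcase : ∀ A ∈ gridBramble k,
      (∃ i j : Fin k, i.val < k - 1 ∧ j.val < k - 1 ∧ A = cross k i j) ∨
      A = botRow k ∨ A = rightCol k := by
    rintro A (h | h | h)
    · exact Or.inl h
    · exact Or.inr (Or.inl h)
    · exact Or.inr (Or.inr h)
  constructor
  · intro A hA
    rcases memcase A hA with ⟨i, j, hi, hj, rfl⟩ | rfl | rfl
    · exact induce_connected_of_conn (cross_conn hk hi hj)
    · exact induce_connected_of_conn (botRow_conn hk)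
    · exact induce_connected_of_conn (rightCol_conn hk)
  · intro A hA B hB
    rcases memcase A hA with ⟨i, j, hi, hj, rfl⟩ | rfl | rfl <;>
      rcases memcase B hB with ⟨i', j', hi', hj', rfl⟩ | rfl | rfl
    · exact touches_cross_cross hj' hi
    · exact touches_cross_bot hk hj
    · exact touches_cross_right hk hi
    · exact touches_symm (touches_cross_bot hk hj')
    · exact Or.inl ((botRow_conn hk).1.mono (Set.subset_inter Set.Subset.rfl Set.Subset.rfl))
    · exact touches_bot_right hk
    · exact touches_symm (touches_cross_right hk hi')
    · exact touches_symm (touches_bot_right hk)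
    · exact Or.inl ((rightCol_conn hk).1.mono (Set.subset_inter Set.Subset.rfl Set.Subset.rfl))

lemma rows_card : ({i : Fin k | i.val < k - 1} : Set (Fin k)).ncard = k - 1 := by
  have hle : k - 1 ≤ k := by omega
  have himg : ({i : Fin k | i.val < k - 1} : Set (Fin k)) =
      (fun j : Fin (k-1) => Fin.castLE hle j) '' Set.univ := by
    ext i
    constructor
    · intro h
      exact ⟨⟨i.val, h⟩, Set.mem_univ _, Fin.ext rfl⟩
    · rintro ⟨j, -, rfl⟩
      exact j.isLt
  rw [himg, Set.ncard_image_of_injective _ (Fin.castLE_injective hle), Set.ncard_univ,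
    Nat.card_eq_fintype_card, Fintype.card_fin]

lemma gridBramble_hit (hk : 2 ≤ k) (S : Set (Fin k × Fin k))
    (hS : IsHitting (gridBramble k) S) : k + 1 ≤ S.ncard := by
  classical
  set sub : Set (Fin k × Fin k) := {p | p.1.val < k - 1 ∧ p.2.val < k - 1} with hsub
  have hkm : k - 1 < k := by omega
  -- the subgrid part has at least k-1 elements
  have hSsub : k - 1 ≤ (S ∩ sub).ncard := by
    by_cases hrows : ∀ i : Fin k, i.val < k - 1 → ∃ p ∈ S ∩ sub, p.1 = i
    · have himg : ({i : Fin k | i.val < k - 1} : Set (Fin k)) ⊆ Prod.fst '' (S ∩ sub) := by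
        intro i hi
        obtain ⟨p, hp, hpi⟩ := hrows i hi
        exact ⟨p, hp, hpi⟩
      calc k - 1 = ({i : Fin k | i.val < k - 1} : Set (Fin k)).ncard := rows_card.symm
        _ ≤ (Prod.fst '' (S ∩ sub)).ncard := Set.ncard_le_ncard himg (Set.toFinite _)
        _ ≤ (S ∩ sub).ncard := Set.ncard_image_le (Set.toFinite _)
    · push_neg at hrows
      obtain ⟨i, hi, hno⟩ := hrows
      have hcols : ∀ j : Fin k, j.val < k - 1 → ∃ p ∈ S ∩ sub, p.2 = j := by
        intro j hj
        obtain ⟨p, hpS, hpc⟩ := hS (cross k i j) (Or.inl ⟨i, j, hi, hj, rfl⟩)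
        rcases hpc with ⟨h1, h2⟩ | ⟨h1, h2⟩
        · refine absurd h1 (hno p ⟨hpS, ?_⟩)
          show p.1.val < k - 1 ∧ p.2.val < k - 1
          rw [h1]
          exact ⟨hi, h2⟩
        · refine ⟨p, ⟨hpS, ?_⟩, h1⟩
          show p.1.val < k - 1 ∧ p.2.val < k - 1
          rw [h1]
          exact ⟨h2, hj⟩
      have himg : ({j : Fin k | j.val < k - 1} : Set (Fin k)) ⊆ Prod.snd '' (S ∩ sub) := by
        intro j hj
        obtain ⟨p, hp, hpj⟩ := hcols j hj
        exact ⟨p, hp, hpj⟩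
      calc k - 1 = ({j : Fin k | j.val < k - 1} : Set (Fin k)).ncard := rows_card.symm
        _ ≤ (Prod.snd '' (S ∩ sub)).ncard := Set.ncard_le_ncard himg (Set.toFinite _)
        _ ≤ (S ∩ sub).ncard := Set.ncard_image_le (Set.toFinite _)
  have hSB : 1 ≤ (S ∩ botRow k).ncard := by
    obtain ⟨p, hp1, hp2⟩ := hS (botRow k) (Or.inr (Or.inl rfl))
    exact (Set.ncard_pos (Set.toFinite _)).2 ⟨p, hp1, hp2⟩
  have hSR : 1 ≤ (S ∩ rightCol k).ncard := by
    obtain ⟨p, hp1, hp2⟩ := hS (rightCol k) (Or.inr (Or.inr rfl))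
    exact (Set.ncard_pos (Set.toFinite _)).2 ⟨p, hp1, hp2⟩
  have hd1 : Disjoint (S ∩ sub) (S ∩ botRow k) := by
    rw [Set.disjoint_left]
    rintro p ⟨-, hp1, -⟩ ⟨-, hp2⟩
    have : p.1.val = k - 1 := hp2
    omega
  have hd2 : Disjoint (S ∩ sub ∪ S ∩ botRow k) (S ∩ rightCol k) := by
    rw [Set.disjoint_left]
    rintro p (⟨-, -, hp1⟩ | ⟨-, hp1⟩) ⟨-, hp2, hp3⟩
    · have : p.2.val = k - 1 := hp2
      omega
    · exact hp3 hp1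
  have hsubset : (S ∩ sub ∪ S ∩ botRow k) ∪ S ∩ rightCol k ⊆ S := by
    rintro p ((⟨h, -⟩ | ⟨h, -⟩) | ⟨h, -⟩) <;> exact h
  have hcard : ((S ∩ sub ∪ S ∩ botRow k) ∪ S ∩ rightCol k).ncard =
      (S ∩ sub).ncard + (S ∩ botRow k).ncard + (S ∩ rightCol k).ncard := by
    rw [Set.ncard_union_eq hd2 (Set.toFinite _) (Set.toFinite _),
      Set.ncard_union_eq hd1 (Set.toFinite _) (Set.toFinite _)]
  have hle := Set.ncard_le_ncard hsubset (Set.toFinite _)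
  omega

end touching

end Aux

/-- the k × k grid has a bramble of order at least k+1, hence
treewidth at least k, and any graph with a k × k grid minor has treewidth
at least k. -/
theorem grid_bramble_treewidth (k : ℕ) (hk : 2 ≤ k) :
    (∃ 𝓑 : Set (Set (Fin k × Fin k)), IsBramble (grid k) 𝓑 ∧
      ∀ S : Set (Fin k × Fin k), IsHitting 𝓑 S → k + 1 ≤ S.ncard) ∧
    k ≤ treewidth (grid k) ∧
    ∀ (V : Type) [Fintype V] (G : SimpleGraph V), IsMinor (grid k) G → k ≤ treewidth G := by
  have hBr := gridBramble_isBramble hk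
  have core : ∀ n : ℕ, HasTDWidthLE (grid k) n → k ≤ n := by
    rintro n ⟨ι, T, B, hTD, hW⟩
    obtain ⟨x, hx⟩ := exists_bag_hitting hTD hBr
    have h1 := gridBramble_hit hk (B x) hx
    have h2 := hW x
    omega
  have part3 : ∀ (V : Type) [Fintype V] (G : SimpleGraph V),
      IsMinor (grid k) G → k ≤ treewidth G := by
    intro V iV G hm
    refine le_csInf ⟨_, trivial_TD G⟩ ?_
    rintro n hn
    obtain ⟨f, hf1, hf2, hf3⟩ := hm
    exact core n (minor_TD_aux f hf1 hf2 hf3 hn)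
  refine ⟨⟨gridBramble k, hBr, fun S hS => gridBramble_hit hk S hS⟩, ?_, part3⟩
  have hself : IsMinor (grid k) (grid k) := by
    refine ⟨fun w => {w}, ?_, ?_, ?_⟩
    · intro w
      refine induce_connected_of_conn ⟨⟨w, rfl⟩, ?_⟩
      intro a ha b hb
      rw [Set.mem_singleton_iff] at ha hb
      subst ha; subst hb
      exact ⟨Walk.nil, fun v hv => by
        rw [Walk.support_nil, List.mem_singleton] at hv
        exact hv⟩
    · intro a b hab
      exact Set.disjoint_singleton_left.2 (by simpa using hab)
    · intro a b hab
      exact ⟨a, rfl, b, rfl, hab⟩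
  exact part3 _ (grid k) hself

end TWPaper
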